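/- arXiv:1703.09600 — 2 statements merged into one kernel-verified Lean document; each statement's English description precedes it below -/
import Mathlib

section
/- Let P ⊂ ℝ^m and Q ⊂ ℝ^n be lattice polytopes, and define their join P ⋆ Q := conv({(x, 0_n, 0) : x ∈ P} ∪ {(0_m, y, 1) : y ∈ Q}) ⊂ ℝ^{m+n+1}, where 0_i denotes the origin of ℝ^i. Then P ⋆ Q is a lattice polytope of dimension dim P + dim Q + 1 and its h*-polynomial satisfies h*_{P⋆Q}(t) = h*_P(t) · h*_Q(t). -/
open scoped Pointwise

/-- A point of `ℝ^n` with integer coordinates. -/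
def isLatticePoint {n : ℕ} (x : Fin n → ℝ) : Prop :=
  ∀ i, ∃ z : ℤ, x i = (z : ℝ)

/-- The lattice `ℤ^n` as a subset of `ℝ^n`. -/
def latticeSet (n : ℕ) : Set (Fin n → ℝ) := {x | isLatticePoint x}

/-- A lattice polytope: the convex hull of a finite set of lattice points. -/
def IsLatticePolytope {n : ℕ} (P : Set (Fin n → ℝ)) : Prop :=
  ∃ S : Finset (Fin n → ℝ), (∀ x ∈ S, isLatticePoint x) ∧
    P = convexHull ℝ (S : Set (Fin n → ℝ))

/-- The `k`-th dilate of `P`, with `0 • P := {0}`. -/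
noncomputable def dilate {n : ℕ} (k : ℕ) (P : Set (Fin n → ℝ)) : Set (Fin n → ℝ) :=
  if k = 0 then {0} else (k : ℝ) • P

/-- The Ehrhart counting function `k ↦ |kP ∩ ℤ^n|`. -/
noncomputable def ehrhart {n : ℕ} (P : Set (Fin n → ℝ)) (k : ℕ) : ℕ :=
  (dilate k P ∩ latticeSet n).ncard

/-- The dimension of a polytope: the dimension of its affine hull. -/
noncomputable def polyDim {n : ℕ} (P : Set (Fin n → ℝ)) : ℕ :=
  Module.finrank ℝ (affineSpan ℝ P).direction

/-- `h : ℕ → ℤ` is the coefficient sequence of the `h^*`-polynomial of `P`, i.e. the unique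
polynomial of degree at most `d = dim P` with
`(1-t)^(d+1) * ∑_{k ≥ 0} |kP ∩ ℤ^n| t^k = ∑ h i t^i`. -/
def IsHStar {n : ℕ} (P : Set (Fin n → ℝ)) (h : ℕ → ℤ) : Prop :=
  (∀ i, polyDim P < i → h i = 0) ∧
    (1 - PowerSeries.X) ^ (polyDim P + 1) *
      PowerSeries.mk (fun k => (ehrhart P k : ℤ)) = PowerSeries.mk h

/-- The affine lattice generated by a set `S`: all integral affine combinations of points
of `S`. -/
def affLatticeSpan {n : ℕ} (S : Set (Fin n → ℝ)) : Set (Fin n → ℝ) :=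
  {y | ∃ (m : ℕ) (a : Fin m → ℤ) (x : Fin m → Fin n → ℝ),
    (∀ j, x j ∈ S) ∧ (∑ j, a j) = 1 ∧ y = ∑ j, (a j : ℝ) • x j}

/-- The join `P ⋆ Q ⊂ ℝ^{m+n+1}` of `P ⊂ ℝ^m` and `Q ⊂ ℝ^n`:
`conv({(x, 0ₙ, 0) : x ∈ P} ∪ {(0ₘ, y, 1) : y ∈ Q})`. -/
noncomputable def joinSet {m n : ℕ} (P : Set (Fin m → ℝ)) (Q : Set (Fin n → ℝ)) :
    Set (Fin (m + n + 1) → ℝ) :=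
  convexHull ℝ
    (((fun x : Fin m → ℝ => Fin.append (Fin.append x (0 : Fin n → ℝ)) ![(0 : ℝ)]) '' P) ∪
      ((fun y : Fin n → ℝ => Fin.append (Fin.append (0 : Fin m → ℝ) y) ![(1 : ℝ)]) '' Q))

namespace JoinAux

variable {m n : ℕ}

noncomputable def app3 (a : Fin m → ℝ) (b : Fin n → ℝ) (c : ℝ) : Fin (m + n + 1) → ℝ :=
  Fin.append (Fin.append a b) ![c]

def idx0 (n : ℕ) (i : Fin m) : Fin (m + n + 1) := (i.castAdd n).castAdd 1
def idx1 (m : ℕ) (j : Fin n) : Fin (m + n + 1) := ((Fin.natAdd m j).castAdd 1)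
def idxl (m n : ℕ) : Fin (m + n + 1) := Fin.natAdd (m + n) 0

@[simp] lemma app3_idx0 (a : Fin m → ℝ) (b : Fin n → ℝ) (c : ℝ) (i : Fin m) :
    app3 a b c (idx0 n i) = a i := by
  simp [app3, idx0, Fin.append_left]

@[simp] lemma app3_idx1 (a : Fin m → ℝ) (b : Fin n → ℝ) (c : ℝ) (j : Fin n) :
    app3 a b c (idx1 m j) = b j := by
  simp [app3, idx1, Fin.append_left, Fin.append_right]

@[simp] lemma app3_idxl (a : Fin m → ℝ) (b : Fin n → ℝ) (c : ℝ) :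
    app3 a b c (idxl m n) = c := by
  simp [app3, idxl, Fin.append_right]

lemma app3_ext {a : Fin m → ℝ} {b : Fin n → ℝ} {c : ℝ} {z : Fin (m + n + 1) → ℝ}
    (h0 : ∀ i, z (idx0 n i) = a i) (h1 : ∀ j, z (idx1 m j) = b j)
    (hl : z (idxl m n) = c) : z = app3 a b c := by
  funext i
  refine Fin.addCases (fun i2 => ?_) (fun i1 => ?_) i
  · refine Fin.addCases (fun i0 => ?_) (fun j0 => ?_) i2
    · rw [show (Fin.castAdd 1 (Fin.castAdd n i0)) = idx0 n i0 from rfl, h0, app3_idx0]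
    · rw [show (Fin.castAdd 1 (Fin.natAdd m j0)) = idx1 m j0 from rfl, h1, app3_idx1]
  · have : i1 = 0 := Subsingleton.elim _ _
    subst this
    rw [show (Fin.natAdd (m + n) (0 : Fin 1)) = idxl m n from rfl, hl, app3_idxl]

lemma app3_add (a a' : Fin m → ℝ) (b b' : Fin n → ℝ) (c c' : ℝ) :
    app3 a b c + app3 a' b' c' = app3 (a + a') (b + b') (c + c') :=
  app3_ext (fun i => by simp) (fun j => by simp) (by simp)

lemma app3_smul (r : ℝ) (a : Fin m → ℝ) (b : Fin n → ℝ) (c : ℝ) :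
    r • app3 a b c = app3 (r • a) (r • b) (r * c) :=
  app3_ext (fun i => by simp) (fun j => by simp) (by simp)

lemma app3_zero : app3 (0 : Fin m → ℝ) (0 : Fin n → ℝ) 0 = 0 :=
  ((app3_ext (z := 0) (fun i => rfl) (fun j => rfl) rfl)).symm

lemma app3_inj {a a' : Fin m → ℝ} {b b' : Fin n → ℝ} {c c' : ℝ}
    (h : app3 a b c = app3 a' b' c') : a = a' ∧ b = b' ∧ c = c' := by
  refine ⟨funext fun i => ?_, funext fun j => ?_, ?_⟩
  · have := congrFun h (idx0 n i); simpa using this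
  · have := congrFun h (idx1 m j); simpa using this
  · have := congrFun h (idxl m n); simpa using this

lemma app3_lattice {a : Fin m → ℝ} {b : Fin n → ℝ} {c : ℝ}
    (ha : isLatticePoint a) (hb : isLatticePoint b) (hc : ∃ z : ℤ, c = (z : ℝ)) :
    isLatticePoint (app3 a b c) := by
  intro i
  refine Fin.addCases (fun i2 => ?_) (fun i1 => ?_) i
  · refine Fin.addCases (fun i0 => ?_) (fun j0 => ?_) i2
    · rw [show (Fin.castAdd 1 (Fin.castAdd n i0)) = idx0 n i0 from rfl, app3_idx0]; exact ha i0
    · rw [show (Fin.castAdd 1 (Fin.natAdd m j0)) = idx1 m j0 from rfl, app3_idx1]; exact hb j0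
  · have : i1 = 0 := Subsingleton.elim _ _
    subst this
    rw [show (Fin.natAdd (m + n) (0 : Fin 1)) = idxl m n from rfl, app3_idxl]; exact hc

lemma lattice_of_app3_lattice {a : Fin m → ℝ} {b : Fin n → ℝ} {c : ℝ}
    (h : isLatticePoint (app3 a b c)) :
    isLatticePoint a ∧ isLatticePoint b ∧ ∃ z : ℤ, c = (z : ℝ) := by
  refine ⟨fun i => ?_, fun j => ?_, ?_⟩
  · have := h (idx0 n i); simpa using this
  · have := h (idx1 m j); simpa using this
  · have := h (idxl m n); simpa using this


noncomputable def L0 (m n : ℕ) : (Fin m → ℝ) →ₗ[ℝ] (Fin (m + n + 1) → ℝ) where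
  toFun x := app3 x 0 0
  map_add' x x' := by rw [app3_add]; congr 1 <;> simp
  map_smul' r x := by rw [app3_smul]; congr 1 <;> simp

noncomputable def L1 (m n : ℕ) : (Fin n → ℝ) →ₗ[ℝ] (Fin (m + n + 1) → ℝ) where
  toFun y := app3 0 y 0
  map_add' y y' := by rw [app3_add]; congr 1 <;> simp
  map_smul' r y := by rw [app3_smul]; congr 1 <;> simp

noncomputable def A1 (m n : ℕ) : (Fin n → ℝ) →ᵃ[ℝ] (Fin (m + n + 1) → ℝ) where
  toFun y := app3 0 y 1
  linear := L1 m n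
  map_vadd' p v := by
    show app3 0 (v + p) 1 = app3 0 v 0 + app3 0 p 1
    rw [app3_add]; congr 1 <;> simp

lemma joinSet_eq {m n : ℕ} {P : Set (Fin m → ℝ)} {Q : Set (Fin n → ℝ)}
    (hPc : Convex ℝ P) (hQc : Convex ℝ Q) (hPne : P.Nonempty) (hQne : Q.Nonempty) :
    joinSet P Q = convexJoin ℝ ((fun x => app3 x 0 0) '' P) ((fun y => app3 0 y 1) '' Q) := by
  have h0 : (fun x : Fin m → ℝ => Fin.append (Fin.append x (0 : Fin n → ℝ)) ![(0 : ℝ)]) =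
      (fun x => app3 x 0 0) := rfl
  have h1 : (fun y : Fin n → ℝ => Fin.append (Fin.append (0 : Fin m → ℝ) y) ![(1 : ℝ)]) =
      (fun y => app3 0 y 1) := rfl
  rw [joinSet, h0, h1, convexHull_union (hPne.image _) (hQne.image _),
    show ((fun x => app3 x 0 0) '' P) = (L0 m n) '' P from rfl,
    show ((fun y => app3 0 y 1) '' Q) = (A1 m n) '' Q from rfl,
    ← LinearMap.image_convexHull, ← AffineMap.image_convexHull,
    hPc.convexHull_eq, hQc.convexHull_eq]

lemma mem_joinSet {m n : ℕ} {P : Set (Fin m → ℝ)} {Q : Set (Fin n → ℝ)}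
    (hPc : Convex ℝ P) (hQc : Convex ℝ Q) (hPne : P.Nonempty) (hQne : Q.Nonempty)
    {z : Fin (m + n + 1) → ℝ} :
    z ∈ joinSet P Q ↔ ∃ x ∈ P, ∃ y ∈ Q, ∃ t : ℝ, 0 ≤ t ∧ t ≤ 1 ∧
      z = app3 ((1 - t) • x) (t • y) t := by
  have key : ∀ (x : Fin m → ℝ) (y : Fin n → ℝ) (t : ℝ),
      (1 - t) • app3 x (0 : Fin n → ℝ) 0 + t • app3 (0 : Fin m → ℝ) y 1
        = app3 ((1 - t) • x) (t • y) t := by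
    intro x y t
    rw [app3_smul, app3_smul, app3_add]
    congr 1 <;> simp
  rw [joinSet_eq hPc hQc hPne hQne, mem_convexJoin]
  constructor
  · rintro ⟨a, ⟨x, hx, rfl⟩, b, ⟨y, hy, rfl⟩, hz⟩
    rw [segment_eq_image] at hz
    obtain ⟨t, ht, hz⟩ := hz
    refine ⟨x, hx, y, hy, t, ht.1, ht.2, ?_⟩
    rw [← hz]
    show (1 - t) • app3 x 0 0 + t • app3 0 y 1 = _
    exact key x y t
  · rintro ⟨x, hx, y, hy, t, ht0, ht1, rfl⟩
    refine ⟨_, ⟨x, hx, rfl⟩, _, ⟨y, hy, rfl⟩, ?_⟩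
    rw [segment_eq_image]
    refine ⟨t, ⟨ht0, ht1⟩, ?_⟩
    show (1 - t) • app3 x 0 0 + t • app3 0 y 1 = _
    exact key x y t

lemma dilate_zero {N : ℕ} (P : Set (Fin N → ℝ)) : dilate 0 P = {0} := if_pos rfl

lemma dilate_pos {N : ℕ} (P : Set (Fin N → ℝ)) {k : ℕ} (hk : k ≠ 0) :
    dilate k P = (k : ℝ) • P := if_neg hk

lemma mem_dilate {N : ℕ} {P : Set (Fin N → ℝ)} (hne : P.Nonempty) {j : ℕ} {a : Fin N → ℝ} :
    a ∈ dilate j P ↔ ∃ x ∈ P, a = (j : ℝ) • x := by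
  rcases Nat.eq_zero_or_pos j with hj | hj
  · subst hj
    rw [dilate_zero]
    simp only [Set.mem_singleton_iff, Nat.cast_zero, zero_smul]
    exact ⟨fun h => hne.imp (fun x hx => ⟨hx, h⟩), fun ⟨x, _, h⟩ => h⟩
  · rw [dilate_pos _ hj.ne']
    constructor
    · rintro ⟨x, hx, rfl⟩; exact ⟨x, hx, rfl⟩
    · rintro ⟨x, hx, rfl⟩; exact ⟨x, hx, rfl⟩

lemma mem_dilate_join {m n : ℕ} {P : Set (Fin m → ℝ)} {Q : Set (Fin n → ℝ)}
    (hPc : Convex ℝ P) (hQc : Convex ℝ Q) (hPne : P.Nonempty) (hQne : Q.Nonempty)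
    {k : ℕ} {z : Fin (m + n + 1) → ℝ} :
    z ∈ dilate k (joinSet P Q) ↔ ∃ x ∈ P, ∃ y ∈ Q, ∃ s : ℝ, 0 ≤ s ∧ s ≤ (k : ℝ) ∧
      z = app3 (((k : ℝ) - s) • x) (s • y) s := by
  rcases Nat.eq_zero_or_pos k with hk | hk
  · subst hk
    rw [dilate_zero]
    simp only [Set.mem_singleton_iff, Nat.cast_zero]
    constructor
    · rintro rfl
      obtain ⟨x, hx⟩ := hPne
      obtain ⟨y, hy⟩ := hQne
      exact ⟨x, hx, y, hy, 0, le_refl _, le_refl _, by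
        rw [show (0 : ℝ) - 0 = 0 by ring, zero_smul, zero_smul, app3_zero]⟩
    · rintro ⟨x, hx, y, hy, s, hs0, hs1, rfl⟩
      have : s = 0 := le_antisymm hs1 hs0
      subst this
      rw [show (0 : ℝ) - 0 = 0 by ring, zero_smul, zero_smul, app3_zero]
  · have hkR : (0 : ℝ) < (k : ℝ) := by exact_mod_cast hk
    rw [dilate_pos _ hk.ne']
    constructor
    · rintro ⟨w, hw, rfl⟩
      rw [mem_joinSet hPc hQc hPne hQne] at hw
      obtain ⟨x, hx, y, hy, t, ht0, ht1, rfl⟩ := hw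
      refine ⟨x, hx, y, hy, (k : ℝ) * t, by positivity, ?_, ?_⟩
      · nlinarith
      · show (k : ℝ) • app3 ((1 - t) • x) (t • y) t = _
        rw [app3_smul, smul_smul, smul_smul]
        congr 2
        ring
    · rintro ⟨x, hx, y, hy, s, hs0, hs1, rfl⟩
      refine ⟨app3 ((1 - s / k) • x) ((s / k) • y) (s / k), ?_, ?_⟩
      · rw [mem_joinSet hPc hQc hPne hQne]
        exact ⟨x, hx, y, hy, s / k, by positivity, by
          rw [div_le_one hkR]; exact hs1, rfl⟩
      · show (k : ℝ) • app3 ((1 - s / ↑k) • x) ((s / ↑k) • y) (s / ↑k) = _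
        rw [app3_smul, smul_smul, smul_smul]
        congr 2 <;> field_simp

lemma finite_inter_lattice {N : ℕ} {s : Set (Fin N → ℝ)} (hs : Bornology.IsBounded s) :
    (s ∩ latticeSet N).Finite := by
  obtain ⟨C, hC⟩ := (isBounded_iff_forall_norm_le).mp hs
  have hsub : s ∩ latticeSet N ⊆
      (fun z : Fin N → ℤ => fun i => (z i : ℝ)) ''
        (Set.Icc (fun _ => -⌈C⌉) (fun _ => ⌈C⌉)) := by
    rintro x ⟨hxs, hxl⟩
    refine ⟨fun i => (hxl i).choose, ⟨fun i => ?_, fun i => ?_⟩, funext fun i => ?_⟩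
    · have hxi : x i = ((hxl i).choose : ℝ) := (hxl i).choose_spec
      have h1 : |x i| ≤ C := le_trans (norm_le_pi_norm x i) (hC x hxs)
      have : -(⌈C⌉ : ℝ) ≤ ((hxl i).choose : ℝ) := by
        rw [← hxi]
        have := Int.le_ceil C
        have := abs_le.mp h1
        linarith
      exact_mod_cast this
    · have hxi : x i = ((hxl i).choose : ℝ) := (hxl i).choose_spec
      have h1 : |x i| ≤ C := le_trans (norm_le_pi_norm x i) (hC x hxs)
      have : ((hxl i).choose : ℝ) ≤ (⌈C⌉ : ℝ) := by
        rw [← hxi]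
        have := Int.le_ceil C
        have := abs_le.mp h1
        linarith
      exact_mod_cast this
    · exact ((hxl i).choose_spec).symm
  exact Set.Finite.subset ((Set.finite_Icc _ _).image _) hsub

lemma polytope_bounded {N : ℕ} {P : Set (Fin N → ℝ)} (hP : IsLatticePolytope P) :
    Bornology.IsBounded P := by
  obtain ⟨S, _, rfl⟩ := hP
  exact isBounded_convexHull.mpr S.finite_toSet.isBounded

lemma finite_dilate_lattice {N : ℕ} {P : Set (Fin N → ℝ)} (hP : IsLatticePolytope P) (k : ℕ) :
    (dilate k P ∩ latticeSet N).Finite := by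
  rcases Nat.eq_zero_or_pos k with hk | hk
  · subst hk
    exact Set.Finite.subset (Set.finite_singleton 0)
      (by rw [dilate_zero]; exact Set.inter_subset_left)
  · refine finite_inter_lattice ?_
    rw [dilate_pos _ hk.ne']
    exact (polytope_bounded hP).smul₀ _

lemma join_lattice_decomp {m n : ℕ} {P : Set (Fin m → ℝ)} {Q : Set (Fin n → ℝ)}
    (hPc : Convex ℝ P) (hQc : Convex ℝ Q) (hPne : P.Nonempty) (hQne : Q.Nonempty) (k : ℕ) :
    dilate k (joinSet P Q) ∩ latticeSet (m + n + 1) =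
      ⋃ l ∈ Finset.range (k + 1),
        (fun p : (Fin m → ℝ) × (Fin n → ℝ) => app3 p.1 p.2 ((l : ℕ) : ℝ)) ''
          ((dilate (k - l) P ∩ latticeSet m) ×ˢ (dilate l Q ∩ latticeSet n)) := by
  ext z
  simp only [Set.mem_iUnion, Set.mem_inter_iff, exists_prop, Finset.mem_range]
  constructor
  · rintro ⟨hz, hzl⟩
    rw [mem_dilate_join hPc hQc hPne hQne] at hz
    obtain ⟨x, hx, y, hy, s, hs0, hsk, rfl⟩ := hz
    obtain ⟨ha, hb, w, hw⟩ := lattice_of_app3_lattice hzl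
    have hw0 : (0 : ℤ) ≤ w := by exact_mod_cast hw ▸ hs0
    have hwk : w ≤ (k : ℤ) := by exact_mod_cast hw ▸ hsk
    set l : ℕ := w.toNat with hl
    have hlw : (l : ℤ) = w := Int.toNat_of_nonneg hw0
    have hls : ((l : ℕ) : ℝ) = s := by rw [hw]; exact_mod_cast congrArg (Int.cast : ℤ → ℝ) hlw
    have hlk : l ≤ k := by omega
    refine ⟨l, by omega, ⟨_, _⟩, ⟨⟨?_, ha⟩, ⟨?_, hb⟩⟩, by rw [hls]⟩
    · rw [mem_dilate hPne]
      exact ⟨x, hx, by rw [Nat.cast_sub hlk, hls]⟩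
    · rw [mem_dilate hQne]
      exact ⟨y, hy, by rw [hls]⟩
  · rintro ⟨l, hlk, ⟨a, b⟩, ⟨⟨haP, haL⟩, ⟨hbQ, hbL⟩⟩, rfl⟩
    have hlk' : l ≤ k := by omega
    constructor
    · rw [mem_dilate_join hPc hQc hPne hQne]
      obtain ⟨x, hx, hax⟩ := (mem_dilate hPne).mp haP
      obtain ⟨y, hy, hby⟩ := (mem_dilate hQne).mp hbQ
      refine ⟨x, hx, y, hy, (l : ℝ), by positivity, by exact_mod_cast hlk', ?_⟩
      show app3 a b ((l : ℕ) : ℝ) = _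
      rw [show a = ((k - l : ℕ) : ℝ) • x from hax, show b = ((l : ℕ) : ℝ) • y from hby,
        Nat.cast_sub hlk']
    · exact app3_lattice haL hbL ⟨(l : ℤ), by push_cast; rfl⟩

lemma ncard_prod' {α β : Type*} (s : Set α) (t : Set β) :
    (s ×ˢ t).ncard = s.ncard * t.ncard := by
  rw [← Nat.card_coe_set_eq, ← Nat.card_coe_set_eq, ← Nat.card_coe_set_eq, ← Nat.card_prod]
  exact Nat.card_congr (Equiv.Set.prod s t)

lemma ncard_biUnion_finset {α : Type*} (s : Finset ℕ) (F : ℕ → Set α)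
    (hfin : ∀ i ∈ s, (F i).Finite)
    (hdisj : ∀ i ∈ s, ∀ j ∈ s, i ≠ j → Disjoint (F i) (F j)) :
    (⋃ i ∈ s, F i).ncard = ∑ i ∈ s, (F i).ncard := by
  induction s using Finset.induction_on with
  | empty => simp
  | @insert a s ha ih =>
    rw [Finset.sum_insert ha]
    have h1 : (⋃ i ∈ insert a s, F i) = F a ∪ ⋃ i ∈ s, F i := by
      simp [Set.biUnion_insert]
    have hfa : (F a).Finite := hfin a (Finset.mem_insert_self a s)
    have hfu : (⋃ i ∈ (s : Finset ℕ), F i).Finite :=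
      Set.Finite.biUnion s.finite_toSet (fun i hi => hfin i (Finset.mem_insert_of_mem hi))
    have hd : Disjoint (F a) (⋃ i ∈ (s : Finset ℕ), F i) := by
      rw [Set.disjoint_iff_inter_eq_empty, Set.inter_iUnion₂, Set.eq_empty_iff_forall_notMem]
      rintro x hx
      simp only [Set.mem_iUnion, Set.mem_inter_iff, exists_prop] at hx
      obtain ⟨i, hi, hxa, hxi⟩ := hx
      exact Set.disjoint_left.mp (hdisj a (Finset.mem_insert_self a s) i
        (Finset.mem_insert_of_mem hi) (fun h => ha (h ▸ hi))) hxa hxi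
    rw [h1, Set.ncard_union_eq hd hfa hfu,
      ih (fun i hi => hfin i (Finset.mem_insert_of_mem hi))
      (fun i hi j hj hij => hdisj i (Finset.mem_insert_of_mem hi) j
        (Finset.mem_insert_of_mem hj) hij)]

lemma ehrhart_join {m n : ℕ} {P : Set (Fin m → ℝ)} {Q : Set (Fin n → ℝ)}
    (hP : IsLatticePolytope P) (hQ : IsLatticePolytope Q)
    (hPne : P.Nonempty) (hQne : Q.Nonempty) (k : ℕ) :
    ehrhart (joinSet P Q) k = ∑ l ∈ Finset.range (k + 1), ehrhart P (k - l) * ehrhart Q l := by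
  have hPc : Convex ℝ P := by obtain ⟨S, _, rfl⟩ := hP; exact convex_convexHull ℝ _
  have hQc : Convex ℝ Q := by obtain ⟨S, _, rfl⟩ := hQ; exact convex_convexHull ℝ _
  set F : ℕ → Set (Fin (m + n + 1) → ℝ) := fun l =>
    (fun p : (Fin m → ℝ) × (Fin n → ℝ) => app3 p.1 p.2 ((l : ℕ) : ℝ)) ''
      ((dilate (k - l) P ∩ latticeSet m) ×ˢ (dilate l Q ∩ latticeSet n)) with hF
  have hfin : ∀ l ∈ Finset.range (k + 1), (F l).Finite := fun l _ =>
    ((finite_dilate_lattice hP (k - l)).prod (finite_dilate_lattice hQ l)).image _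
  have hdisj : ∀ i ∈ Finset.range (k + 1), ∀ j ∈ Finset.range (k + 1), i ≠ j →
      Disjoint (F i) (F j) := by
    intro i _ j _ hij
    rw [Set.disjoint_left]
    rintro z ⟨⟨a, b⟩, _, rfl⟩ ⟨⟨a', b'⟩, _, h⟩
    have := (app3_inj h).2.2
    exact hij (by exact_mod_cast this.symm)
  rw [ehrhart, join_lattice_decomp hPc hQc hPne hQne k, ncard_biUnion_finset _ _ hfin hdisj]
  refine Finset.sum_congr rfl fun l _ => ?_
  have hinj : Function.Injective
      (fun p : (Fin m → ℝ) × (Fin n → ℝ) => app3 p.1 p.2 ((l : ℕ) : ℝ)) := by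
    rintro ⟨a, b⟩ ⟨a', b'⟩ h
    obtain ⟨h1, h2, _⟩ := app3_inj h
    exact Prod.ext h1 h2
  rw [hF]
  rw [Set.ncard_image_of_injective _ hinj, ncard_prod']
  rfl

lemma zero_mem_lattice {N : ℕ} : (0 : Fin N → ℝ) ∈ latticeSet N :=
  fun _ => ⟨0, by simp⟩

lemma ehrhart_zero {N : ℕ} (P : Set (Fin N → ℝ)) : ehrhart P 0 = 1 := by
  rw [ehrhart, dilate_zero, Set.inter_eq_left.mpr (Set.singleton_subset_iff.mpr zero_mem_lattice),
    Set.ncard_singleton]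

lemma nonempty_of_isHStar {N : ℕ} {P : Set (Fin N → ℝ)} (h : ℕ → ℤ)
    (hh : IsHStar P h) : P.Nonempty := by
  by_contra hne
  rw [Set.not_nonempty_iff_eq_empty] at hne
  subst hne
  have hd : polyDim (∅ : Set (Fin N → ℝ)) = 0 := by
    rw [polyDim, AffineSubspace.span_empty, AffineSubspace.direction_bot, finrank_bot]
  have he1 : ehrhart (∅ : Set (Fin N → ℝ)) 1 = 0 := by
    rw [ehrhart, dilate_pos _ one_ne_zero]
    simp
  have := congrArg (PowerSeries.coeff (R := ℤ) 1) hh.2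
  rw [hd, pow_one, sub_mul, one_mul, map_sub, PowerSeries.coeff_mk,
    show (1 : ℕ) = 0 + 1 from rfl, PowerSeries.coeff_succ_X_mul, PowerSeries.coeff_mk,
    PowerSeries.coeff_mk, he1, ehrhart_zero, hh.1 1 (by omega)] at this
  norm_num at this

lemma mk_ehrhart_join {m n : ℕ} {P : Set (Fin m → ℝ)} {Q : Set (Fin n → ℝ)}
    (hP : IsLatticePolytope P) (hQ : IsLatticePolytope Q)
    (hPne : P.Nonempty) (hQne : Q.Nonempty) :
    PowerSeries.mk (fun k => (ehrhart (joinSet P Q) k : ℤ)) =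
      PowerSeries.mk (fun k => (ehrhart P k : ℤ)) *
        PowerSeries.mk (fun k => (ehrhart Q k : ℤ)) := by
  ext k
  rw [PowerSeries.coeff_mk, PowerSeries.coeff_mul,
    Finset.Nat.sum_antidiagonal_eq_sum_range_succ_mk, ehrhart_join hP hQ hPne hQne k]
  push_cast
  rw [← Finset.sum_range_reflect]
  refine Finset.sum_congr rfl fun j hj => ?_
  rw [Finset.mem_range] at hj
  simp only [PowerSeries.coeff_mk]
  have h1 : k - (k + 1 - 1 - j) = j := by omega
  have h2 : k + 1 - 1 - j = k - j := by omega
  rw [h1, h2]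

lemma L0_inj {m n : ℕ} : Function.Injective (L0 m n) := by
  intro x x' h
  exact (app3_inj (show app3 x 0 0 = app3 x' 0 0 from h)).1

lemma L1_inj {m n : ℕ} : Function.Injective (L1 m n) := by
  intro y y' h
  exact (app3_inj (show app3 0 y 0 = app3 0 y' 0 from h)).2.1

lemma polyDim_join {m n : ℕ} {P : Set (Fin m → ℝ)} {Q : Set (Fin n → ℝ)}
    (hPne : P.Nonempty) (hQne : Q.Nonempty) :
    polyDim (joinSet P Q) = polyDim P + polyDim Q + 1 := by
  obtain ⟨x₀, hx₀⟩ := hPne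
  obtain ⟨y₀, hy₀⟩ := hQne
  set A : Set (Fin (m + n + 1) → ℝ) := (L0 m n) '' P with hA
  set B : Set (Fin (m + n + 1) → ℝ) := (A1 m n) '' Q with hB
  have hJ : joinSet P Q = convexHull ℝ (A ∪ B) := rfl
  set v : Fin (m + n + 1) → ℝ := app3 0 y₀ 1 - app3 x₀ 0 0 with hv
  set U0 : Submodule ℝ (Fin (m + n + 1) → ℝ) := Submodule.map (L0 m n) (vectorSpan ℝ P) with hU0
  set U1 : Submodule ℝ (Fin (m + n + 1) → ℝ) := Submodule.map (L1 m n) (vectorSpan ℝ Q) with hU1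
  set Uv : Submodule ℝ (Fin (m + n + 1) → ℝ) := Submodule.span ℝ {v} with hUv
  have hpA : (L0 m n) x₀ ∈ A ∪ B := Or.inl ⟨x₀, hx₀, rfl⟩
  have hBmem : ∀ y ∈ Q, (A1 m n) y ∈ A ∪ B := fun y hy => Or.inr ⟨y, hy, rfl⟩
  have hAmem : ∀ x ∈ P, (L0 m n) x ∈ A ∪ B := fun x hx => Or.inl ⟨x, hx, rfl⟩
  -- the key submodule identity
  have key : vectorSpan ℝ (A ∪ B) = U0 ⊔ (U1 ⊔ Uv) := by
    apply le_antisymm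
    · rw [vectorSpan_eq_span_vsub_set_right ℝ hpA]
      rw [Submodule.span_le]
      rintro _ ⟨z, hz, rfl⟩
      rcases hz with ⟨x, hx, rfl⟩ | ⟨y, hy, rfl⟩
      · apply Submodule.mem_sup_left
        exact ⟨x - x₀, vsub_mem_vectorSpan ℝ hx hx₀, by rw [map_sub]; rfl⟩
      · have hdecomp : (A1 m n) y -ᵥ (L0 m n) x₀ = (L1 m n) (y - y₀) + v := by
          show app3 (0 : Fin m → ℝ) y 1 - app3 x₀ (0 : Fin n → ℝ) 0 =
            app3 (0 : Fin m → ℝ) (y - y₀) 0 +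
              (app3 (0 : Fin m → ℝ) y₀ 1 - app3 x₀ (0 : Fin n → ℝ) 0)
          have : app3 (0 : Fin m → ℝ) (y - y₀) 0 + app3 (0 : Fin m → ℝ) y₀ 1 =
              app3 (0 : Fin m → ℝ) y 1 := by
            rw [app3_add]; congr 1 <;> simp
          rw [← this]; abel
        show (A1 m n) y -ᵥ (L0 m n) x₀ ∈ _
        rw [hdecomp]
        apply Submodule.mem_sup_right
        exact Submodule.add_mem _
          (Submodule.mem_sup_left ⟨y - y₀, vsub_mem_vectorSpan ℝ hy hy₀, rfl⟩)
          (Submodule.mem_sup_right (Submodule.mem_span_singleton_self v))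
    · refine sup_le ?_ (sup_le ?_ ?_)
      · rw [hU0, vectorSpan_eq_span_vsub_set_right ℝ hx₀, Submodule.map_span,
          Submodule.span_le]
        rintro _ ⟨_, ⟨x, hx, rfl⟩, rfl⟩
        have : (L0 m n) (x -ᵥ x₀) = (L0 m n) x -ᵥ (L0 m n) x₀ := map_sub _ _ _
        rw [this]
        exact vsub_mem_vectorSpan ℝ (hAmem x hx) hpA
      · rw [hU1, vectorSpan_eq_span_vsub_set_right ℝ hy₀, Submodule.map_span,
          Submodule.span_le]
        rintro _ ⟨_, ⟨y, hy, rfl⟩, rfl⟩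
        have : (L1 m n) (y -ᵥ y₀) = (A1 m n) y -ᵥ (A1 m n) y₀ := by
          show app3 (0 : Fin m → ℝ) (y - y₀) 0 =
            app3 (0 : Fin m → ℝ) y 1 - app3 (0 : Fin m → ℝ) y₀ 1
          have : app3 (0 : Fin m → ℝ) (y - y₀) 0 + app3 (0 : Fin m → ℝ) y₀ 1 =
              app3 (0 : Fin m → ℝ) y 1 := by
            rw [app3_add]; congr 1 <;> simp
          rw [← this]; abel
        rw [this]
        exact vsub_mem_vectorSpan ℝ (hBmem y hy) (hBmem y₀ hy₀)
      · rw [hUv, Submodule.span_le, Set.singleton_subset_iff]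
        exact vsub_mem_vectorSpan ℝ (hBmem y₀ hy₀) hpA
  -- evaluation at the last coordinate
  have hlast_U1 : ∀ w ∈ U1, w (idxl m n) = 0 := by
    rintro _ ⟨u, _, rfl⟩
    show (app3 0 u 0) (idxl m n) = 0
    simp
  have hlast_U0 : ∀ w ∈ U0, w (idxl m n) = 0 := by
    rintro _ ⟨u, _, rfl⟩
    show (app3 u 0 0) (idxl m n) = 0
    simp
  have hvlast : v (idxl m n) = 1 := by
    rw [hv]
    show (app3 0 y₀ 1) (idxl m n) - (app3 x₀ 0 0) (idxl m n) = 1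
    simp
  have hvne : v ≠ 0 := fun h => by simp [h] at hvlast
  -- disjointness
  have hd1 : U1 ⊓ Uv = ⊥ := by
    rw [Submodule.eq_bot_iff]
    rintro w ⟨hw1, hw2⟩
    obtain ⟨c, rfl⟩ := Submodule.mem_span_singleton.mp hw2
    have h1 : (c • v) (idxl m n) = 0 := hlast_U1 _ hw1
    have h2 : (c • v) (idxl m n) = c := by
      show c * v (idxl m n) = c
      rw [hvlast, mul_one]
    rw [h2] at h1
    rw [h1, zero_smul]
  have hd0 : U0 ⊓ (U1 ⊔ Uv) = ⊥ := by
    rw [Submodule.eq_bot_iff]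
    rintro w ⟨hw1, hw2⟩
    obtain ⟨w1, hw1', w2, hw2', rfl⟩ := Submodule.mem_sup.mp hw2
    obtain ⟨c, rfl⟩ := Submodule.mem_span_singleton.mp hw2'
    have hc : c = 0 := by
      have h1 : (w1 + c • v) (idxl m n) = 0 := hlast_U0 _ hw1
      have h2 : (w1 + c • v) (idxl m n) = c := by
        show w1 (idxl m n) + c * v (idxl m n) = c
        rw [hlast_U1 _ hw1', hvlast, mul_one, zero_add]
      rw [h2] at h1
      exact h1
    subst hc
    rw [zero_smul, add_zero] at hw1 ⊢
    obtain ⟨u, _, hu⟩ := hw1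
    obtain ⟨u1, _, hu1⟩ := hw1'
    have h3 : (L0 m n) u = (L1 m n) u1 := hu.trans hu1.symm
    have hu0 : u = 0 := (app3_inj (show app3 u 0 0 = app3 0 u1 0 from h3)).1
    rw [← hu]
    show app3 u 0 0 = 0
    rw [hu0, app3_zero]
  -- finrank computations
  have hr0 : Module.finrank ℝ U0 = polyDim P := by
    rw [hU0, ← (Submodule.equivMapOfInjective _ L0_inj (vectorSpan ℝ P)).finrank_eq,
      polyDim, direction_affineSpan]
  have hr1 : Module.finrank ℝ U1 = polyDim Q := by
    rw [hU1, ← (Submodule.equivMapOfInjective _ L1_inj (vectorSpan ℝ Q)).finrank_eq,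
      polyDim, direction_affineSpan]
  have hrv : Module.finrank ℝ Uv = 1 := finrank_span_singleton hvne
  have hsum1 : Module.finrank ℝ (U1 ⊔ Uv : Submodule ℝ _) =
      Module.finrank ℝ U1 + Module.finrank ℝ Uv := by
    have := Submodule.finrank_sup_add_finrank_inf_eq U1 Uv
    rw [hd1, finrank_bot, add_zero] at this
    exact this
  have hsum0 : Module.finrank ℝ (U0 ⊔ (U1 ⊔ Uv) : Submodule ℝ _) =
      Module.finrank ℝ U0 + Module.finrank ℝ (U1 ⊔ Uv : Submodule ℝ _) := by
    have := Submodule.finrank_sup_add_finrank_inf_eq U0 (U1 ⊔ Uv)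
    rw [hd0, finrank_bot, add_zero] at this
    exact this
  rw [polyDim, hJ, affineSpan_convexHull, direction_affineSpan, key,
    hsum0, hsum1, hr0, hr1, hrv]
  omega

lemma zero_lattice {N : ℕ} : isLatticePoint (0 : Fin N → ℝ) := fun _ => ⟨0, by simp⟩

end JoinAux

open JoinAux

/-- The join of two lattice polytopes is a lattice polytope of dimension
`dim P + dim Q + 1` whose `h^*`-polynomial is the product `h^*_P(t) · h^*_Q(t)`. -/
theorem stmt_10 {m n : ℕ} (P : Set (Fin m → ℝ)) (Q : Set (Fin n → ℝ))
    (hP : IsLatticePolytope P) (hQ : IsLatticePolytope Q)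
    (hp hq : ℕ → ℤ) (hhp : IsHStar P hp) (hhq : IsHStar Q hq) :
    IsLatticePolytope (joinSet P Q) ∧
    polyDim (joinSet P Q) = polyDim P + polyDim Q + 1 ∧
    IsHStar (joinSet P Q) (fun i => ∑ j ∈ Finset.range (i + 1), hp j * hq (i - j)) := by
  have hPne : P.Nonempty := nonempty_of_isHStar hp hhp
  have hQne : Q.Nonempty := nonempty_of_isHStar hq hhq
  have hdim : polyDim (joinSet P Q) = polyDim P + polyDim Q + 1 := polyDim_join hPne hQne
  refine ⟨?_, hdim, ?_, ?_⟩
  · obtain ⟨SP, hSP, hPeq⟩ := hP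
    obtain ⟨SQ, hSQ, hQeq⟩ := hQ
    classical
    refine ⟨SP.image (fun x => app3 x (0 : Fin n → ℝ) 0) ∪
      SQ.image (fun y => app3 (0 : Fin m → ℝ) y 1), ?_, ?_⟩
    · intro z hz
      rcases Finset.mem_union.mp hz with hz | hz
      · obtain ⟨x, hx, rfl⟩ := Finset.mem_image.mp hz
        exact app3_lattice (hSP x hx) zero_lattice ⟨0, by simp⟩
      · obtain ⟨y, hy, rfl⟩ := Finset.mem_image.mp hz
        exact app3_lattice zero_lattice (hSQ y hy) ⟨1, by simp⟩
    · rw [show joinSet P Q = convexHull ℝ ((L0 m n) '' P ∪ (A1 m n) '' Q) from rfl,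
        hPeq, hQeq, LinearMap.image_convexHull, AffineMap.image_convexHull,
        convexHull_convexHull_union_left, convexHull_convexHull_union_right,
        Finset.coe_union, Finset.coe_image, Finset.coe_image]
      rfl
  · intro i hi
    rw [hdim] at hi
    apply Finset.sum_eq_zero
    intro j hj
    rw [Finset.mem_range] at hj
    by_cases hjp : polyDim P < j
    · rw [hhp.1 j hjp, zero_mul]
    · rw [hhq.1 (i - j) (by omega), mul_zero]
  · rw [hdim, show polyDim P + polyDim Q + 1 + 1 = (polyDim P + 1) + (polyDim Q + 1) by ring,
      pow_add, mk_ehrhart_join hP hQ hPne hQne]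
    have hre : (1 - PowerSeries.X) ^ (polyDim P + 1) * (1 - PowerSeries.X) ^ (polyDim Q + 1) *
        (PowerSeries.mk (fun k => (ehrhart P k : ℤ)) *
          PowerSeries.mk (fun k => (ehrhart Q k : ℤ))) =
        ((1 - PowerSeries.X) ^ (polyDim P + 1) * PowerSeries.mk (fun k => (ehrhart P k : ℤ))) *
          ((1 - PowerSeries.X) ^ (polyDim Q + 1) *
            PowerSeries.mk (fun k => (ehrhart Q k : ℤ))) := by ring
    rw [hre, hhp.2, hhq.2]
    ext i
    rw [PowerSeries.coeff_mul, Finset.Nat.sum_antidiagonal_eq_sum_range_succ_mk,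
      PowerSeries.coeff_mk]
    simp [PowerSeries.coeff_mk]
end

section
/- For every pair of positive integers s ≥ 1 and b ≥ 1, there exists a (2s−1)-dimensional lattice simplex Δ_{s,b} ⊂ ℝ^{2s−1} (a lattice polytope with exactly 2s vertices that are affinely independent) whose h*-polynomial equals 1 + b·t^s. -/
open scoped Pointwise

open Finset



/-- tuples with sum at most `N` -/
def Dset (m N : ℕ) : Finset (Fin m → ℕ) :=
  (Fintype.piFinset fun _ => Finset.range (N+1)).filter (fun f => ∑ i, f i ≤ N)

lemma mem_Dset {m N : ℕ} (f : Fin m → ℕ) : f ∈ Dset m N ↔ ∑ i, f i ≤ N := by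
  simp only [Dset, Finset.mem_filter, Fintype.mem_piFinset, Finset.mem_range]
  constructor
  · exact fun h => h.2
  · intro h
    refine ⟨fun i => ?_, h⟩
    have : f i ≤ ∑ j, f j := Finset.single_le_sum (fun j _ => Nat.zero_le _) (Finset.mem_univ i)
    omega

lemma card_Dset (m N : ℕ) : (Dset m N).card = (N + m).choose m := by
  induction m generalizing N with
  | zero =>
    rw [Nat.choose_zero_right]
    rw [Finset.card_eq_one]
    refine ⟨fun i => 0, ?_⟩
    ext f
    simp only [mem_Dset, Finset.mem_singleton]
    constructor
    · intro _; ext i; exact absurd i.2 (by omega)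
    · rintro rfl; simp
  | succ m ih =>
    have hsplit : Dset (m+1) N = (Finset.range (N+1)).biUnion
        (fun j => (Dset m (N - j)).image (fun g => Fin.cons (α := fun _ => ℕ) j g)) := by
      ext f
      simp only [mem_Dset, Finset.mem_biUnion, Finset.mem_range, Finset.mem_image]
      constructor
      · intro hf
        have h0 : f 0 ≤ ∑ i, f i :=
          Finset.single_le_sum (fun j _ => Nat.zero_le _) (Finset.mem_univ 0)
        refine ⟨f 0, by omega, Fin.tail f, ?_, Fin.cons_self_tail f⟩
        have h1 := Fin.sum_univ_succ f
        have ht : ∑ i : Fin m, Fin.tail f i = ∑ i : Fin m, f i.succ := rfl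
        omega
      · rintro ⟨j, hj, g, hg, rfl⟩
        rw [Fin.sum_cons]
        omega
    rw [hsplit, Finset.card_biUnion]
    · have hc : ∀ j ∈ Finset.range (N+1),
          ((Dset m (N - j)).image (fun g => Fin.cons (α := fun _ => ℕ) j g)).card
            = (N - j + m).choose m := by
        intro j _
        rw [Finset.card_image_of_injective _ (Fin.cons_right_injective (α := fun _ : Fin (m+1) => ℕ) j), ih]
      rw [Finset.sum_congr rfl hc]
      have hr : ∑ j ∈ Finset.range (N+1), (N - j + m).choose m
          = ∑ j ∈ Finset.range (N+1), (j + m).choose m := by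
        rw [← Finset.sum_range_reflect]
        apply Finset.sum_congr rfl
        intro j hj
        simp only [Finset.mem_range] at hj
        congr 2
        omega
      rw [hr, Nat.sum_range_add_choose]
      congr 1
    · intro x _ y _ hxy
      simp only [Finset.disjoint_left, Finset.mem_image]
      rintro f ⟨g, _, rfl⟩ ⟨g', _, hg'⟩
      exact hxy (by
        have := congrFun hg' 0
        simpa using this.symm)



section Construction

variable (t b : ℕ)

/-- the weight vector -/
def aa : Fin (2*t+1) → ℕ := fun i => if (i:ℕ) < t then b else if (i:ℕ) < 2*t then 1 else b+1

/-- the last index -/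
def LL : Fin (2*t+1) := ⟨2*t, by omega⟩

noncomputable def uu : Fin (2*t+1) → (Fin (2*t+1) → ℝ) :=
  fun i => if i = LL t then (fun j => (aa t b j : ℝ)) else Pi.single i (1:ℝ)

noncomputable def ww : Fin (2*t+2) → (Fin (2*t+1) → ℝ) := Fin.cons 0 (uu t b)

lemma coe_LL : ((LL t : Fin (2*t+1)) : ℕ) = 2*t := rfl

lemma aa_LL : aa t b (LL t) = b + 1 := by
  simp only [aa, coe_LL]
  show (if 2*t < t then b else if 2*t < 2*t then 1 else b+1) = b+1
  rw [if_neg (by omega), if_neg (by omega)]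

lemma aa_lt {j : Fin (2*t+1)} (h : (j:ℕ) < t) : aa t b j = b := if_pos h

lemma aa_mid {j : Fin (2*t+1)} (h1 : t ≤ (j:ℕ)) (h2 : (j:ℕ) < 2*t) : aa t b j = 1 := by
  simp only [aa]; rw [if_neg (by omega), if_pos h2]

lemma ne_LL_iff {j : Fin (2*t+1)} : j ≠ LL t ↔ (j:ℕ) < 2*t := by
  constructor
  · intro h
    have := j.2
    rcases Nat.lt_or_ge (j:ℕ) (2*t) with h'|h'
    · exact h'
    · exact absurd (Fin.ext (by omega : (j:ℕ) = 2*t)) h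
  · intro h hj
    rw [hj, coe_LL] at h
    omega

lemma sum_ite3 (c1 c2 c3 : ℕ) :
    ∑ j : Fin (2*t+1), (if (j:ℕ) < t then c1 else if (j:ℕ) < 2*t then c2 else c3)
      = t*c1 + t*c2 + c3 := by
  rw [Fin.sum_univ_eq_sum_range (fun j => if j < t then c1 else if j < 2*t then c2 else c3)]
  rw [Finset.sum_range_succ, if_neg (by omega), if_neg (by omega)]
  rw [Finset.range_eq_Ico, ← Finset.sum_Ico_consecutive _ (Nat.zero_le t) (by omega : t ≤ 2*t)]
  have h1 : ∑ j ∈ Finset.Ico 0 t, (if j < t then c1 else if j < 2*t then c2 else c3) = t * c1 := by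
    rw [Finset.sum_congr rfl (fun j hj => if_pos (by simp at hj; omega))]
    rw [Finset.sum_const, Nat.card_Ico, smul_eq_mul]
    congr 1
  have h2 : ∑ j ∈ Finset.Ico t (2*t), (if j < t then c1 else if j < 2*t then c2 else c3)
      = t * c2 := by
    have : ∀ j ∈ Finset.Ico t (2*t),
        (if j < t then c1 else if j < 2*t then c2 else c3) = c2 := by
      intro j hj
      simp only [Finset.mem_Ico] at hj
      rw [if_neg (by omega), if_pos (by omega)]
    rw [Finset.sum_congr rfl this, Finset.sum_const, Nat.card_Ico, smul_eq_mul]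
    congr 1
    omega
  rw [h1, h2]

lemma sum_aa : ∑ j, aa t b j = (t+1)*(b+1) := by
  have : ∑ j, aa t b j = t*b + t*1 + (b+1) := sum_ite3 t b 1 (b+1)
  rw [this]; ring

lemma uu_LL_apply (j : Fin (2*t+1)) : uu t b (LL t) j = (aa t b j : ℝ) := by
  simp only [uu, if_pos rfl, if_true]

lemma uu_ne {i : Fin (2*t+1)} (h : i ≠ LL t) : uu t b i = Pi.single i (1:ℝ) := if_neg h

lemma sum_smul_uu (lam : Fin (2*t+1) → ℝ) (j : Fin (2*t+1)) :
    (∑ i, lam i • uu t b i) j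
      = lam (LL t) * (aa t b j : ℝ) + (if j = LL t then 0 else lam j) := by
  classical
  have h1 : (∑ i, lam i • uu t b i) j = ∑ i, lam i * uu t b i j := by
    rw [Finset.sum_apply]
    exact Finset.sum_congr rfl (fun i _ => rfl)
  rw [h1, ← Finset.add_sum_erase _ (fun i => lam i * uu t b i j) (Finset.mem_univ (LL t)),
    uu_LL_apply]
  congr 1
  have h2 : ∀ i ∈ Finset.univ.erase (LL t),
      lam i * uu t b i j = if j = i then lam i else 0 := by
    intro i hi
    rw [uu_ne t b (Finset.ne_of_mem_erase hi), Pi.single_apply]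
    by_cases h : j = i <;> simp [h]
  rw [Finset.sum_congr rfl h2, Finset.sum_ite_eq]
  by_cases h : j = LL t
  · rw [if_pos h, if_neg (by simp [h])]
  · rw [if_neg h, if_pos (by simp [h])]




lemma hull_eq :
    convexHull ℝ (Set.range (ww t b)) =
      {x | ∃ lam : Fin (2*t+1) → ℝ, (∀ i, 0 ≤ lam i) ∧ (∑ i, lam i) ≤ 1 ∧
        x = ∑ i, lam i • uu t b i} := by
  apply le_antisymm
  · apply convexHull_min
    · rintro _ ⟨i, rfl⟩
      refine Fin.cases ?_ ?_ i
      · refine ⟨0, fun i => le_refl 0, by simp, ?_⟩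
        simp [ww]
      · intro i
        refine ⟨Pi.single i 1, fun j => ?_, ?_, ?_⟩
        · by_cases h : j = i <;> simp [Pi.single_apply, h]
        · simp [Finset.sum_pi_single']
        · have : ww t b i.succ = uu t b i := by simp [ww]
          rw [this]
          rw [Finset.sum_eq_single_of_mem i (Finset.mem_univ i)]
          · simp
          · intro j _ hj
            simp [Pi.single_apply, hj]
    · rintro x ⟨lam, hl0, hl1, rfl⟩ y ⟨mu, hm0, hm1, rfl⟩ p q hp hq hpq
      refine ⟨fun i => p * lam i + q * mu i,
        fun i => add_nonneg (mul_nonneg hp (hl0 i)) (mul_nonneg hq (hm0 i)), ?_, ?_⟩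
      · rw [Finset.sum_add_distrib, ← Finset.mul_sum, ← Finset.mul_sum]
        nlinarith [Finset.sum_nonneg (fun i (_ : i ∈ Finset.univ) => hl0 i),
          Finset.sum_nonneg (fun i (_ : i ∈ Finset.univ) => hm0 i)]
      · simp only [add_smul, mul_smul]
        rw [Finset.sum_add_distrib, ← Finset.smul_sum, ← Finset.smul_sum]
  · rintro x ⟨lam, h0, h1, rfl⟩
    have key : ∑ i : Fin (2*t+2), (Fin.cons (1 - ∑ i, lam i) lam : Fin (2*t+2) → ℝ) i • ww t b i
        = ∑ i, lam i • uu t b i := by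
      rw [Fin.sum_univ_succ]
      simp only [Fin.cons_zero, Fin.cons_succ, ww]
      simp [Fin.cons_succ]
    rw [← key]
    apply Convex.sum_mem (convex_convexHull ℝ _)
    · intro i _
      refine Fin.cases ?_ ?_ i
      · simp only [Fin.cons_zero]
        have := Finset.sum_nonneg (fun i (_ : i ∈ Finset.univ) => h0 i)
        linarith
      · intro j; simp only [Fin.cons_succ]; exact h0 j
    · rw [Fin.sum_cons]
      ring
    · intro i _
      exact subset_convexHull ℝ _ ⟨i, rfl⟩

lemma mem_dilate (k : ℕ) (x : Fin (2*t+1) → ℝ) :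
    x ∈ dilate k (convexHull ℝ (Set.range (ww t b))) ↔
      ∃ lam : Fin (2*t+1) → ℝ, (∀ i, 0 ≤ lam i) ∧ (∑ i, lam i) ≤ (k:ℝ) ∧
        x = ∑ i, lam i • uu t b i := by
  rcases Nat.eq_zero_or_pos k with rfl|hk
  · rw [dilate, if_pos rfl]
    simp only [Set.mem_singleton_iff, Nat.cast_zero]
    constructor
    · rintro rfl
      exact ⟨0, fun i => le_refl 0, by simp, by simp⟩
    · rintro ⟨lam, h0, h1, rfl⟩
      have hz : ∀ i, lam i = 0 := by
        intro i
        have hle : lam i ≤ ∑ j, lam j :=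
          Finset.single_le_sum (fun j _ => h0 j) (Finset.mem_univ i)
        have := h0 i
        linarith
      rw [Finset.sum_congr rfl (fun i _ => by rw [hz i])]
      simp
  · have hk0 : (k:ℝ) ≠ 0 := by positivity
    rw [dilate, if_neg (by omega)]
    rw [hull_eq]
    constructor
    · rintro ⟨y, ⟨lam, h0, h1, rfl⟩, rfl⟩
      refine ⟨fun i => (k:ℝ) * lam i,
        fun i => mul_nonneg (by positivity) (h0 i), ?_, ?_⟩
      · rw [← Finset.mul_sum]
        nlinarith [(Nat.cast_pos (α := ℝ)).mpr hk]
      · show (k:ℝ) • _ = _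
        rw [Finset.smul_sum]
        exact Finset.sum_congr rfl (fun i _ => by rw [smul_smul])
    · rintro ⟨lam, h0, h1, rfl⟩
      refine ⟨∑ i, (lam i / (k:ℝ)) • uu t b i,
        ⟨fun i => lam i / k, fun i => div_nonneg (h0 i) (by positivity), ?_, rfl⟩, ?_⟩
      · rw [← Finset.sum_div]
        rw [div_le_one (by positivity)]
        simpa using h1
      · show (k:ℝ) • _ = _
        rw [Finset.smul_sum]
        apply Finset.sum_congr rfl
        intro i _
        rw [smul_smul]
        congr 1
        field_simp

lemma cast_xn_eq {xn : Fin (2*t+1) → ℕ} {y : Fin (2*t+1) → ℝ} (h : y = fun j => (xn j : ℝ)) :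
    ∀ j, (xn j : ℝ) = y j := fun j => by rw [h]

lemma sum_aa_erase : ∑ i ∈ Finset.univ.erase (LL t), ((aa t b i : ℕ):ℝ) = (t:ℝ)*((b:ℝ)+1) := by
  have h1 : ∑ i ∈ Finset.univ.erase (LL t), ((aa t b i : ℕ):ℝ) + ((aa t b (LL t) : ℕ):ℝ)
      = ∑ i, ((aa t b i : ℕ):ℝ) := Finset.sum_erase_add _ _ (Finset.mem_univ _)
  have h2 : ∑ i, ((aa t b i : ℕ):ℝ) = ((t:ℝ)+1)*((b:ℝ)+1) := by
    rw [← Nat.cast_sum, sum_aa]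
    push_cast
    ring
  rw [aa_LL] at h1
  push_cast at h1
  linarith

lemma sum_ite_LL (lam : Fin (2*t+1) → ℝ) :
    ∑ j, (if j = LL t then (0:ℝ) else lam j) = ∑ j, lam j - lam (LL t) := by
  have h1 : ∑ j ∈ Finset.univ.erase (LL t), (if j = LL t then (0:ℝ) else lam j)
      + (if LL t = LL t then (0:ℝ) else lam (LL t))
      = ∑ j, (if j = LL t then (0:ℝ) else lam j) := Finset.sum_erase_add _ _ (Finset.mem_univ _)
  rw [if_pos rfl, add_zero] at h1
  have h2 : ∀ j ∈ Finset.univ.erase (LL t), (if j = LL t then (0:ℝ) else lam j) = lam j :=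
    fun j hj => if_neg (Finset.ne_of_mem_erase hj)
  rw [Finset.sum_congr rfl h2] at h1
  have h3 : ∑ j ∈ Finset.univ.erase (LL t), lam j + lam (LL t) = ∑ j, lam j :=
    Finset.sum_erase_add _ _ (Finset.mem_univ _)
  linarith

lemma mem_dilate_lattice (k : ℕ) (x : Fin (2*t+1) → ℝ) :
    x ∈ dilate k (convexHull ℝ (Set.range (ww t b))) ∩ latticeSet (2*t+1) ↔
    ∃ xn : Fin (2*t+1) → ℕ, x = (fun j => (xn j : ℝ)) ∧
      (∀ j, aa t b j * xn (LL t) ≤ (b+1) * xn j) ∧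
      (b+1) * (∑ j, xn j) + xn (LL t) ≤ (b+1) * (k + (t+1) * xn (LL t)) := by
  constructor
  · rintro ⟨hx, hlat⟩
    rw [mem_dilate] at hx
    obtain ⟨lam, h0, h1, rfl⟩ := hx
    set y : Fin (2*t+1) → ℝ := ∑ i, lam i • uu t b i with hy
    have hyj : ∀ j, y j = lam (LL t) * (aa t b j : ℝ) + (if j = LL t then 0 else lam j) :=
      sum_smul_uu t b lam
    have hyL : y (LL t) = lam (LL t) * ((b:ℝ)+1) := by
      rw [hyj (LL t), if_pos rfl, aa_LL, add_zero]
      push_cast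
      ring
    have hynn : ∀ j, 0 ≤ y j := by
      intro j; rw [hyj j]
      have ha : (0:ℝ) ≤ (aa t b j : ℝ) := Nat.cast_nonneg _
      by_cases h : j = LL t
      · rw [if_pos h]; have := h0 (LL t); nlinarith
      · rw [if_neg h]; have := h0 (LL t); have := h0 j; nlinarith
    choose z hz using hlat
    have hznn : ∀ j, (0:ℤ) ≤ z j := fun j => by
      have h := hynn j; rw [hz j] at h; exact_mod_cast h
    have hxn : ∀ j, (((z j).toNat : ℕ) : ℝ) = y j := by
      intro j
      rw [hz j]
      have : ((z j).toNat : ℤ) = z j := Int.toNat_of_nonneg (hznn j)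
      exact_mod_cast congrArg (fun w : ℤ => (w:ℝ)) this
    refine ⟨fun j => (z j).toNat, ?_, ?_, ?_⟩
    · funext j
      rw [hz j]
      have : ((z j).toNat : ℤ) = z j := Int.toNat_of_nonneg (hznn j)
      exact_mod_cast congrArg (fun w : ℤ => (w:ℝ)) this.symm
    · -- condition 1
      intro j
      have hr : (aa t b j : ℝ) * y (LL t) ≤ ((b:ℝ)+1) * y j := by
        rw [hyj j, hyL]
        by_cases h : j = LL t
        · subst h; rw [if_pos rfl]; apply le_of_eq; ring
        · rw [if_neg h]
          have := h0 j
          have ha : (0:ℝ) ≤ (aa t b j : ℝ) := Nat.cast_nonneg _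
          nlinarith
      rw [← hxn j, ← hxn (LL t)] at hr
      exact_mod_cast hr
    · -- condition 2
      have hS : (∑ j, (((z j).toNat : ℕ):ℝ))
          = lam (LL t) * (((t:ℝ)+1)*((b:ℝ)+1)) + (∑ i, lam i - lam (LL t)) := by
        rw [Finset.sum_congr rfl (fun j _ => hxn j)]
        rw [Finset.sum_congr rfl (fun j _ => hyj j)]
        rw [Finset.sum_add_distrib, ← Finset.mul_sum, sum_ite_LL]
        congr 2
        have hcast : ∑ i, ((aa t b i : ℕ):ℝ) = ((t:ℝ)+1)*((b:ℝ)+1) := by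
          rw [← Nat.cast_sum, sum_aa]; push_cast; ring
        rw [hcast]
      have hrr : ((b:ℝ)+1) * (∑ j, (((z j).toNat : ℕ):ℝ)) + (((z (LL t)).toNat : ℕ):ℝ)
          ≤ ((b:ℝ)+1) * ((k:ℝ) + ((t:ℝ)+1) * (((z (LL t)).toNat : ℕ):ℝ)) := by
        rw [hS, hxn (LL t), hyL]
        have hb1 : (0:ℝ) ≤ (b:ℝ)+1 := by positivity
        nlinarith [mul_le_mul_of_nonneg_left h1 hb1]
      exact_mod_cast hrr
  · rintro ⟨xn, rfl, h1, h2⟩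
    have hB : (0:ℝ) < (b:ℝ)+1 := by positivity
    have h1' : ∀ j, (aa t b j : ℝ) * (xn (LL t):ℝ) ≤ ((b:ℝ)+1) * (xn j:ℝ) := by
      intro j; exact_mod_cast h1 j
    have h2' : ((b:ℝ)+1) * (∑ j, (xn j:ℝ)) + (xn (LL t):ℝ)
        ≤ ((b:ℝ)+1) * ((k:ℝ) + ((t:ℝ)+1) * (xn (LL t):ℝ)) := by
      exact_mod_cast h2
    set lam : Fin (2*t+1) → ℝ := fun i => if i = LL t then (xn (LL t) : ℝ)/((b:ℝ)+1)
      else (xn i : ℝ) - (aa t b i : ℝ) * ((xn (LL t):ℝ)/((b:ℝ)+1)) with hlam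
    have hlamL : lam (LL t) = (xn (LL t) : ℝ)/((b:ℝ)+1) := if_pos rfl
    have hlamne : ∀ i, i ≠ LL t →
        lam i = (xn i : ℝ) - (aa t b i : ℝ) * ((xn (LL t):ℝ)/((b:ℝ)+1)) := fun i hi => if_neg hi
    have hlamsum : ∑ i, lam i
        = (∑ j, (xn j:ℝ)) - ((t:ℝ)+1)*(xn (LL t):ℝ) + (xn (LL t):ℝ)/((b:ℝ)+1) := by
      rw [← Finset.sum_erase_add _ _ (Finset.mem_univ (LL t)), hlamL]
      rw [Finset.sum_congr rfl (fun i hi => hlamne i (Finset.ne_of_mem_erase hi))]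
      rw [Finset.sum_sub_distrib, ← Finset.sum_mul, sum_aa_erase]
      have hxe : ∑ i ∈ Finset.univ.erase (LL t), (xn i : ℝ) = ∑ j, (xn j:ℝ) - (xn (LL t):ℝ) := by
        have := Finset.sum_erase_add Finset.univ (fun i => ((xn i : ℕ):ℝ)) (Finset.mem_univ (LL t))
        linarith
      rw [hxe]
      field_simp
      ring
    constructor
    · rw [mem_dilate]
      refine ⟨lam, ?_, ?_, ?_⟩
      · intro i
        by_cases h : i = LL t
        · rw [h, hlamL]; positivity
        · rw [hlamne i h, sub_nonneg]
          rw [mul_div_assoc'] at *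
          rw [div_le_iff₀ hB]
          calc (aa t b i : ℝ) * (xn (LL t):ℝ) ≤ ((b:ℝ)+1) * (xn i:ℝ) := h1' i
            _ = (xn i:ℝ) * ((b:ℝ)+1) := by ring
      · rw [hlamsum]
        rw [← mul_le_mul_iff_right₀ hB]
        have key : ((b:ℝ)+1) * ((∑ j, (xn j:ℝ)) - ((t:ℝ)+1)*(xn (LL t):ℝ) + (xn (LL t):ℝ)/((b:ℝ)+1))
            = ((b:ℝ)+1) * (∑ j, (xn j:ℝ)) - ((b:ℝ)+1)*((t:ℝ)+1)*(xn (LL t):ℝ) + (xn (LL t):ℝ) := by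
          field_simp
        rw [key]
        nlinarith [h2']
      · funext j
        rw [sum_smul_uu, hlamL]
        by_cases h : j = LL t
        · rw [if_pos h, h, aa_LL, add_zero]
          push_cast
          field_simp
        · rw [if_neg h, hlamne j h]
          ring
    · intro j
      exact ⟨(xn j : ℤ), by push_cast; ring⟩

/-- lower-corner offsets -/
def gg (t b r q : ℕ) : Fin (2*t+1) → ℕ := fun j =>
  if (j:ℕ) < t then b*q + r else if (j:ℕ) < 2*t then q + (if r = 0 then 0 else 1) else b*q + r

lemma gg_LL (r q : ℕ) : gg t b r q (LL t) = b*q + r := by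
  simp only [gg, coe_LL]
  show (if 2*t < t then b*q + r else if 2*t < 2*t then q + (if r = 0 then 0 else 1) else b*q + r) = b*q + r
  rw [if_neg (by omega), if_neg (by omega)]

lemma sum_gg (r q : ℕ) :
    ∑ j, gg t b r q j = t*(b*q + r) + t*(q + (if r = 0 then 0 else 1)) + (b*q + r) :=
  sum_ite3 t (b*q + r) (q + (if r = 0 then 0 else 1)) (b*q + r)

/-- parametrization map -/
def Psi (t b : ℕ) (p : ℕ × (Fin (2*t+1) → ℕ)) : Fin (2*t+1) → ℕ :=
  fun j => p.2 j + gg t b p.1 (p.2 (LL t)) j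

/-- the model finset -/
def MF (t b k : ℕ) : Finset (ℕ × (Fin (2*t+1) → ℕ)) :=
  ((Finset.range (b+1)) ×ˢ (Fintype.piFinset fun _ => Finset.range (k+1))).filter
    (fun p => (if p.1 = 0 then 0 else t+1) + ∑ j, p.2 j ≤ k)

lemma mem_MF {k : ℕ} (p : ℕ × (Fin (2*t+1) → ℕ)) :
    p ∈ MF t b k ↔ p.1 ≤ b ∧ (if p.1 = 0 then 0 else t+1) + ∑ j, p.2 j ≤ k := by
  simp only [MF, Finset.mem_filter, Finset.mem_product, Finset.mem_range,
    Fintype.mem_piFinset]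
  constructor
  · rintro ⟨⟨h1, _⟩, h3⟩
    exact ⟨by omega, h3⟩
  · rintro ⟨h1, h3⟩
    refine ⟨⟨by omega, fun i => ?_⟩, h3⟩
    have : p.2 i ≤ ∑ j, p.2 j :=
      Finset.single_le_sum (fun j _ => Nat.zero_le _) (Finset.mem_univ i)
    omega

lemma Psi_LL (p : ℕ × (Fin (2*t+1) → ℕ)) :
    Psi t b p (LL t) = (b+1) * p.2 (LL t) + p.1 := by
  simp only [Psi, gg_LL]
  ring

/-- M1 : image of the model satisfies the arithmetic conditions -/
lemma M1 {k : ℕ} (r : ℕ) (f : Fin (2*t+1) → ℕ) (hrb : r ≤ b)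
    (hsum : (if r = 0 then 0 else t+1) + ∑ j, f j ≤ k) :
    (∀ j, aa t b j * Psi t b (r, f) (LL t) ≤ (b+1) * Psi t b (r, f) j) ∧
      (b+1) * (∑ j, Psi t b (r, f) j) + Psi t b (r, f) (LL t)
        ≤ (b+1) * (k + (t+1) * Psi t b (r, f) (LL t)) := by
  have hP : ∀ j, Psi t b (r, f) j = f j + gg t b r (f (LL t)) j := fun j => rfl
  set q := f (LL t) with hq
  have hxL : Psi t b (r, f) (LL t) = (b+1) * q + r := by
    rw [hP, gg_LL]; ring
  have hsplit : ∑ j, Psi t b (r,f) j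
      = (∑ j, f j) + (t*(b*q + r) + t*(q + (if r = 0 then 0 else 1)) + (b*q + r)) := by
    rw [Finset.sum_congr rfl (fun j _ => hP j), Finset.sum_add_distrib, sum_gg]
  constructor
  · intro j
    rcases Nat.lt_or_ge (j:ℕ) t with hj | hj
    · rw [aa_lt t b hj, hxL]
      have hgg : Psi t b (r,f) j = f j + (b*q + r) := by
        rw [hP]; simp only [gg, if_pos hj]
      rw [hgg]
      have e : (b+1)*(f j + (b*q + r)) = b*((b+1)*q + r) + ((b+1)*(f j) + r) := by ring
      rw [e]
      exact Nat.le_add_right _ _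
    · rcases Nat.lt_or_ge (j:ℕ) (2*t) with hj2 | hj2
      · rw [aa_mid t b hj hj2, hxL, one_mul]
        have hgg : Psi t b (r,f) j = f j + (q + (if r = 0 then 0 else 1)) := by
          rw [hP]; simp only [gg, if_neg (by omega : ¬ (j:ℕ) < t), if_pos hj2]
        rw [hgg]
        rcases Nat.eq_zero_or_pos r with hr | hr
        · rw [if_pos hr, hr]
          have e : (b+1)*(f j + (q + 0)) = ((b+1)*q + 0) + (b+1)*(f j) := by ring
          rw [e]
          exact Nat.le_add_right _ _
        · rw [if_neg (by omega)]
          have e : (b+1)*(f j + (q + 1)) = ((b+1)*q + (b+1)) + (b+1)*(f j) := by ring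
          rw [e]
          refine le_trans ?_ (Nat.le_add_right _ _)
          exact Nat.add_le_add_left (by omega) _
      · have hjL : j = LL t := by
          have := j.2
          exact Fin.ext (by simp only [coe_LL]; omega)
        rw [hjL, aa_LL, mul_comm]
  · rw [hsplit, hxL]
    rcases Nat.eq_zero_or_pos r with hr | hr
    · rw [if_pos hr, Nat.zero_add] at hsum
      rw [if_pos hr, hr]
      have e1 : (b+1) * ((∑ j, f j) + (t*(b*q + 0) + t*(q + 0) + (b*q + 0))) + ((b+1)*q + 0)
          = (b+1)*(∑ j, f j) + (b+1)*((t+1)*((b+1)*q)) := by ring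
      have e2 : (b+1) * (k + (t+1)*((b+1)*q + 0))
          = (b+1)*k + (b+1)*((t+1)*((b+1)*q)) := by ring
      rw [e1, e2]
      exact Nat.add_le_add_right (Nat.mul_le_mul_left _ hsum) _
    · rw [if_neg (by omega)] at hsum ⊢
      have h3 : (b+1)*(∑ j, f j) + (b+1)*t + r ≤ (b+1)*k := by
        calc (b+1)*(∑ j, f j) + (b+1)*t + r ≤ (b+1)*(∑ j, f j) + (b+1)*t + (b+1) := by omega
          _ = (b+1)*((∑ j, f j) + t + 1) := by ring
          _ ≤ (b+1)*k := Nat.mul_le_mul_left _ (by omega)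
      have e1 : (b+1) * ((∑ j, f j) + (t*(b*q + r) + t*(q + 1) + (b*q + r))) + ((b+1)*q + r)
          = ((b+1)*(∑ j, f j) + (b+1)*t + r) + (b+1)*((t+1)*((b+1)*q + r)) := by ring
      have e2 : (b+1) * (k + (t+1)*((b+1)*q + r))
          = (b+1)*k + (b+1)*((t+1)*((b+1)*q + r)) := by ring
      rw [e1, e2]
      exact Nat.add_le_add_right h3 _
/-- M2 : every solution comes from the model -/
lemma M2 {k : ℕ} (xn : Fin (2*t+1) → ℕ)
    (h1 : ∀ j, aa t b j * xn (LL t) ≤ (b+1) * xn j)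
    (h2 : (b+1) * (∑ j, xn j) + xn (LL t) ≤ (b+1) * (k + (t+1) * xn (LL t))) :
    ∃ p ∈ MF t b k, Psi t b p = xn := by
  set q := xn (LL t) / (b+1) with hqdef
  set r := xn (LL t) % (b+1) with hrdef
  have hB : 0 < b + 1 := Nat.succ_pos b
  have hr : r < b + 1 := Nat.mod_lt _ hB
  have hql : (b+1) * q + r = xn (LL t) := Nat.div_add_mod _ _
  have hub : ∀ j, gg t b r q j ≤ xn j := by
    intro j
    rcases Nat.lt_or_ge (j:ℕ) t with hj | hj
    · have hgg : gg t b r q j = b*q + r := by simp only [gg, if_pos hj]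
      rw [hgg]
      have h1j := h1 j
      rw [aa_lt t b hj] at h1j
      have key : (b+1)*(b*q + r) < (b+1)*(xn j + 1) := by
        calc (b+1)*(b*q + r) = b*((b+1)*q + r) + r := by ring
          _ = b * xn (LL t) + r := by rw [hql]
          _ ≤ (b+1) * xn j + r := Nat.add_le_add_right h1j r
          _ < (b+1) * (xn j + 1) := by
              have e : (b+1)*(xn j + 1) = (b+1)*(xn j) + (b+1) := by ring
              rw [e]
              exact Nat.add_lt_add_left hr _
      exact Nat.lt_succ_iff.mp (Nat.lt_of_mul_lt_mul_left key)
    · rcases Nat.lt_or_ge (j:ℕ) (2*t) with hj2 | hj2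
      · have hgg : gg t b r q j = q + (if r = 0 then 0 else 1) := by
          simp only [gg, if_neg (by omega : ¬ (j:ℕ) < t), if_pos hj2]
        rw [hgg]
        have h1j := h1 j
        rw [aa_mid t b hj hj2, one_mul] at h1j
        rcases Nat.eq_zero_or_pos r with hr0 | hr0
        · rw [if_pos hr0, Nat.add_zero]
          have hmul : (b+1)*q ≤ (b+1)*(xn j) := by
            calc (b+1)*q ≤ (b+1)*q + r := Nat.le_add_right _ _
              _ = xn (LL t) := hql
              _ ≤ (b+1)*(xn j) := h1j
          exact Nat.le_of_mul_le_mul_left hmul hB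
        · rw [if_neg (by omega)]
          have hmul : (b+1)*q < (b+1)*(xn j) := by
            calc (b+1)*q < (b+1)*q + r := Nat.lt_add_of_pos_right hr0
              _ = xn (LL t) := hql
              _ ≤ (b+1)*(xn j) := h1j
          have := Nat.lt_of_mul_lt_mul_left hmul
          omega
      · have hjL : j = LL t := by
          have := j.2
          exact Fin.ext (by simp only [coe_LL]; omega)
        rw [hjL, gg_LL]
        calc b*q + r ≤ (b+1)*q + r :=
              Nat.add_le_add_right (Nat.mul_le_mul_right q (Nat.le_succ b)) r
          _ = xn (LL t) := hql
  set f : Fin (2*t+1) → ℕ := fun j => xn j - gg t b r q j with hfdef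
  have hfj : ∀ j, f j = xn j - gg t b r q j := fun j => rfl
  have hfL : f (LL t) = q := by
    rw [hfj, gg_LL, ← hql]
    have e : (b+1)*q + r = (b*q + r) + q := by ring
    rw [e, Nat.add_sub_cancel_left]
  have hPsi : Psi t b (r, f) = xn := by
    funext j
    have hP : Psi t b (r, f) j = f j + gg t b r (f (LL t)) j := rfl
    rw [hP, hfL, hfj]
    exact Nat.sub_add_cancel (hub j)
  have hsum' : ∑ j, xn j = (∑ j, f j) + ∑ j, gg t b r q j := by
    rw [← Finset.sum_add_distrib]
    apply Finset.sum_congr rfl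
    intro j _
    rw [hfj]
    exact (Nat.sub_add_cancel (hub j)).symm
  have hfilter : (if r = 0 then 0 else t+1) + ∑ j, f j ≤ k := by
    rw [hsum', sum_gg, ← hql] at h2
    rcases Nat.eq_zero_or_pos r with hr0 | hr0
    · rw [if_pos hr0, Nat.zero_add]
      rw [if_pos hr0] at h2
      rw [hr0] at h2
      have e1 : (b+1) * ((∑ j, f j) + (t*(b*q + 0) + t*(q + 0) + (b*q + 0))) + ((b+1)*q + 0)
          = (b+1)*(∑ j, f j) + (b+1)*((t+1)*((b+1)*q)) := by ring
      have e2 : (b+1) * (k + (t+1)*((b+1)*q + 0))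
          = (b+1)*k + (b+1)*((t+1)*((b+1)*q)) := by ring
      rw [e1, e2] at h2
      exact Nat.le_of_mul_le_mul_left (Nat.le_of_add_le_add_right h2) hB
    · rw [if_neg (by omega)]
      rw [if_neg (by omega : ¬ r = 0)] at h2
      have e1 : (b+1) * ((∑ j, f j) + (t*(b*q + r) + t*(q + 1) + (b*q + r))) + ((b+1)*q + r)
          = ((b+1)*((∑ j, f j) + t) + r) + (b+1)*((t+1)*((b+1)*q + r)) := by ring
      have e2 : (b+1) * (k + (t+1)*((b+1)*q + r))
          = (b+1)*k + (b+1)*((t+1)*((b+1)*q + r)) := by ring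
      rw [e1, e2] at h2
      have h5 : (b+1)*((∑ j, f j) + t) + r ≤ (b+1)*k := Nat.le_of_add_le_add_right h2
      have h6 : (b+1)*((∑ j, f j) + t) < (b+1)*k :=
        Nat.lt_of_lt_of_le (Nat.lt_add_of_pos_right hr0) h5
      have h7 := Nat.lt_of_mul_lt_mul_left h6
      omega
  refine ⟨(r, f), ?_, hPsi⟩
  rw [mem_MF]
  exact ⟨by omega, hfilter⟩

/-- M3 : injectivity of the parametrization -/
lemma M3 {k : ℕ} {p p' : ℕ × (Fin (2*t+1) → ℕ)} (hp : p ∈ MF t b k) (hp' : p' ∈ MF t b k)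
    (h : Psi t b p = Psi t b p') : p = p' := by
  rw [mem_MF] at hp hp'
  have hL := congrFun h (LL t)
  rw [Psi_LL t b p, Psi_LL t b p'] at hL
  have hdec : ∀ (a r : ℕ), r ≤ b → ((b+1) * a + r) % (b+1) = r ∧ ((b+1) * a + r) / (b+1) = a := by
    intro a r hrb
    constructor
    · rw [Nat.mul_add_mod, Nat.mod_eq_of_lt (by omega)]
    · rw [Nat.mul_add_div (by omega), Nat.div_eq_of_lt (by omega), Nat.add_zero]
  have h1 := hdec (p.2 (LL t)) p.1 hp.1
  have h2 := hdec (p'.2 (LL t)) p'.1 hp'.1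
  have hrr : p.1 = p'.1 := by
    rw [← h1.1, ← h2.1, hL]
  have hqq : p.2 (LL t) = p'.2 (LL t) := by
    rw [← h1.2, ← h2.2, hL]
  have hff : p.2 = p'.2 := by
    funext j
    have hj := congrFun h j
    have e : p.2 j + gg t b p.1 (p.2 (LL t)) j = p'.2 j + gg t b p'.1 (p'.2 (LL t)) j := hj
    rw [hrr, hqq] at e
    exact Nat.add_right_cancel e
  exact Prod.ext hrr hff

/-- cardinality of the model -/
lemma card_MF {k : ℕ} :
    (MF t b k).card = (k + (2*t+1)).choose (2*t+1) + b * ((k + t).choose (2*t+1)) := by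
  classical
  have hMF : MF t b k = (Finset.range (b+1)).biUnion (fun r =>
      ({r} : Finset ℕ) ×ˢ ((Fintype.piFinset fun _ : Fin (2*t+1) => Finset.range (k+1)).filter
        (fun f => (if r = 0 then 0 else t+1) + ∑ j, f j ≤ k))) := by
    ext p
    simp only [mem_MF, Finset.mem_biUnion, Finset.mem_range, Finset.mem_product,
      Finset.mem_singleton, Finset.mem_filter, Fintype.mem_piFinset]
    constructor
    · rintro ⟨hb1, h2⟩
      refine ⟨p.1, by omega, rfl, fun i => ?_, h2⟩
      have : p.2 i ≤ ∑ j, p.2 j :=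
        Finset.single_le_sum (fun j _ => Nat.zero_le _) (Finset.mem_univ i)
      omega
    · rintro ⟨r, hrb, h1, h2, h3⟩
      subst h1
      exact ⟨by omega, h3⟩
  rw [hMF, Finset.card_biUnion]
  · have h0 : ∀ r ∈ Finset.range (b+1),
        (({r} : Finset ℕ) ×ˢ ((Fintype.piFinset fun _ : Fin (2*t+1) => Finset.range (k+1)).filter
          (fun f => (if r = 0 then 0 else t+1) + ∑ j, f j ≤ k))).card
        = (if r = 0 then (k + (2*t+1)).choose (2*t+1) else (k + t).choose (2*t+1)) := by
      intro r _
      rw [Finset.card_product, Finset.card_singleton, one_mul]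
      rcases Nat.eq_zero_or_pos r with hr0 | hr0
      · rw [if_pos hr0, if_pos hr0]
        have hE : ((Fintype.piFinset fun _ : Fin (2*t+1) => Finset.range (k+1)).filter
            (fun f => 0 + ∑ j, f j ≤ k)) = Dset (2*t+1) k := by
          ext f
          rw [mem_Dset]
          simp only [Finset.mem_filter, Fintype.mem_piFinset, Finset.mem_range, Nat.zero_add]
          constructor
          · exact fun hh => hh.2
          · intro hh
            refine ⟨fun i => ?_, hh⟩
            have : f i ≤ ∑ j, f j :=
              Finset.single_le_sum (fun j _ => Nat.zero_le _) (Finset.mem_univ i)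
            omega
        rw [hE, card_Dset]
      · rw [if_neg (by omega : ¬ r = 0), if_neg (by omega : ¬ r = 0)]
        rcases le_or_gt (t+1) k with hk | hk
        · have hE : ((Fintype.piFinset fun _ : Fin (2*t+1) => Finset.range (k+1)).filter
              (fun f => t + 1 + ∑ j, f j ≤ k)) = Dset (2*t+1) (k - (t+1)) := by
            ext f
            rw [mem_Dset]
            simp only [Finset.mem_filter, Fintype.mem_piFinset, Finset.mem_range]
            constructor
            · intro hh; omega
            · intro hh
              refine ⟨fun i => ?_, by omega⟩
              have : f i ≤ ∑ j, f j :=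
                Finset.single_le_sum (fun j _ => Nat.zero_le _) (Finset.mem_univ i)
              omega
          rw [hE, card_Dset]
          congr 1
          omega
        · have hE : ((Fintype.piFinset fun _ : Fin (2*t+1) => Finset.range (k+1)).filter
              (fun f => t + 1 + ∑ j, f j ≤ k)) = ∅ := by
            rw [Finset.eq_empty_iff_forall_notMem]
            intro f hf
            simp only [Finset.mem_filter] at hf
            omega
          rw [hE, Finset.card_empty]
          symm
          apply Nat.choose_eq_zero_of_lt
          omega
    rw [Finset.sum_congr rfl h0, Finset.sum_range_succ']
    simp only [if_neg (Nat.succ_ne_zero _), if_pos rfl]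
    rw [Finset.sum_const, Finset.card_range, smul_eq_mul]
    exact Nat.add_comm _ _
  · intro x _ y _ hxy
    simp only [Finset.disjoint_left, Finset.mem_product, Finset.mem_singleton]
    rintro p ⟨hp1, _⟩ ⟨hp2, _⟩
    exact hxy (hp1 ▸ hp2 ▸ rfl)

lemma dilate_lattice_eq (k : ℕ) :
    dilate k (convexHull ℝ (Set.range (ww t b))) ∩ latticeSet (2*t+1)
      = ↑((MF t b k).image (fun p => (fun j => (Psi t b p j : ℝ)))) := by
  ext x
  rw [Finset.coe_image, Set.mem_image]
  constructor
  · intro hx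
    obtain ⟨xn, rfl, hc1, hc2⟩ := (mem_dilate_lattice t b k _).mp hx
    obtain ⟨p, hp, hP⟩ := M2 t b xn hc1 hc2
    exact ⟨p, Finset.mem_coe.mpr hp, by rw [hP]⟩
  · rintro ⟨p, hp, rfl⟩
    rw [mem_dilate_lattice]
    obtain ⟨r, f⟩ := p
    have hp' := (mem_MF t b _).mp (Finset.mem_coe.mp hp)
    have hM := M1 t b r f hp'.1 hp'.2
    exact ⟨Psi t b (r, f), rfl, hM.1, hM.2⟩

lemma ehrhart_eq (k : ℕ) :
    ehrhart (convexHull ℝ (Set.range (ww t b))) k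
      = (k + (2*t+1)).choose (2*t+1) + b * ((k + t).choose (2*t+1)) := by
  have hinj : Set.InjOn (fun p => (fun j => (Psi t b p j : ℝ))) (MF t b k) := by
    intro p hp p' hp' h
    apply M3 t b (Finset.mem_coe.mp hp) (Finset.mem_coe.mp hp')
    funext j
    have h2 : ((Psi t b p j : ℕ):ℝ) = ((Psi t b p' j : ℕ):ℝ) := congrFun h j
    exact_mod_cast h2
  rw [ehrhart, dilate_lattice_eq, Set.ncard_coe_finset,
    Finset.card_image_of_injOn hinj, card_MF]

noncomputable def VV (t b : ℕ) : Finset (Fin (2*t+1) → ℝ) := Finset.image (ww t b) Finset.univ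

lemma coe_VV : (VV t b : Set (Fin (2*t+1) → ℝ)) = Set.range (ww t b) := by
  rw [VV, Finset.coe_image, Finset.coe_univ, Set.image_univ]

lemma uu_apply_LL (i : Fin (2*t+1)) :
    uu t b i (LL t) = if i = LL t then ((b:ℝ)+1) else 0 := by
  by_cases h : i = LL t
  · rw [if_pos h, h, uu_LL_apply, aa_LL]
    push_cast
    ring
  · rw [if_neg h, uu_ne t b h, Pi.single_apply, if_neg (fun hh => h hh.symm)]

lemma uu_inj : Function.Injective (uu t b) := by
  intro i j h
  have hB : ((b:ℝ)+1) ≠ 0 := by positivity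
  by_cases hi : i = LL t <;> by_cases hj : j = LL t
  · rw [hi, hj]
  · exfalso
    have := congrFun h (LL t)
    rw [uu_apply_LL, uu_apply_LL, if_pos hi, if_neg hj] at this
    exact hB this
  · exfalso
    have := congrFun h (LL t)
    rw [uu_apply_LL, uu_apply_LL, if_neg hi, if_pos hj] at this
    exact hB this.symm
  · have := congrFun h i
    rw [uu_ne t b hi, uu_ne t b hj, Pi.single_eq_same, Pi.single_apply] at this
    by_contra hne
    rw [if_neg hne] at this
    exact one_ne_zero this

lemma uu_ne_zero (i : Fin (2*t+1)) : uu t b i ≠ 0 := by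
  intro h0
  have hB : ((b:ℝ)+1) ≠ 0 := by positivity
  by_cases hi : i = LL t
  · have := congrFun h0 (LL t)
    rw [uu_apply_LL, if_pos hi] at this
    exact hB this
  · have := congrFun h0 i
    rw [uu_ne t b hi, Pi.single_eq_same] at this
    exact one_ne_zero this

lemma ww_inj : Function.Injective (ww t b) := by
  intro i j h
  induction i using Fin.cases with
  | zero =>
    induction j using Fin.cases with
    | zero => rfl
    | succ j =>
      exfalso
      rw [ww, Fin.cons_zero, Fin.cons_succ] at h
      exact uu_ne_zero t b j h.symm
  | succ i =>
    induction j using Fin.cases with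
    | zero =>
      exfalso
      rw [ww, Fin.cons_zero, Fin.cons_succ] at h
      exact uu_ne_zero t b i h
    | succ j =>
      rw [ww, Fin.cons_succ, Fin.cons_succ] at h
      rw [uu_inj t b h]

lemma card_VV : (VV t b).card = 2*t+2 := by
  rw [VV, Finset.card_image_of_injective _ (ww_inj t b), Finset.card_univ, Fintype.card_fin]

lemma VV_lattice : ∀ x ∈ VV t b, isLatticePoint x := by
  intro x hx
  rw [VV, Finset.mem_image] at hx
  obtain ⟨i, _, rfl⟩ := hx
  induction i using Fin.cases with
  | zero =>
    intro j
    exact ⟨0, by rw [ww, Fin.cons_zero]; simp⟩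
  | succ i =>
    intro j
    rw [ww, Fin.cons_succ]
    by_cases hi : i = LL t
    · exact ⟨aa t b j, by rw [hi, uu_LL_apply]; push_cast; ring⟩
    · rw [uu_ne t b hi, Pi.single_apply]
      by_cases hj : j = i
      · exact ⟨1, by rw [if_pos hj]; simp⟩
      · exact ⟨0, by rw [if_neg hj]; simp⟩

lemma uu_linIndep : LinearIndependent ℝ (uu t b) := by
  rw [Fintype.linearIndependent_iff]
  intro g hg
  have hB : ((b:ℝ)+1) ≠ 0 := by positivity
  have hL : g (LL t) = 0 := by
    have h := congrFun hg (LL t)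
    rw [sum_smul_uu, if_pos rfl, add_zero, aa_LL, Pi.zero_apply] at h
    rcases mul_eq_zero.mp h with h'' | h''
    · exact h''
    · exfalso; apply hB; exact_mod_cast h''
  intro i
  by_cases hi : i = LL t
  · rw [hi]; exact hL
  · have h := congrFun hg i
    rw [sum_smul_uu, if_neg hi, hL, zero_mul, zero_add, Pi.zero_apply] at h
    exact h

lemma ww_affineIndependent : AffineIndependent ℝ (ww t b) := by
  rw [affineIndependent_iff_linearIndependent_vsub ℝ (ww t b) 0]
  have hf : Function.Injective
      (fun i : {x : Fin (2*t+2) // x ≠ 0} => (i.1).pred (by exact i.2)) := by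
    intro i j hij
    apply Subtype.ext
    have := congrArg Fin.succ hij
    rwa [Fin.succ_pred, Fin.succ_pred] at this
  have := (uu_linIndep t b).comp _ hf
  convert this using 1
  funext i
  show ww t b i.1 -ᵥ ww t b 0 = uu t b ((i.1).pred i.2)
  rw [ww, Fin.cons_zero, vsub_eq_sub, sub_zero]
  conv_lhs => rw [show (i.1) = ((i.1).pred i.2).succ from (Fin.succ_pred _ _).symm]
  rw [Fin.cons_succ]
  all_goals rfl

lemma span_uu_top : Submodule.span ℝ (Set.range (uu t b)) = ⊤ := by
  apply LinearIndependent.span_eq_top_of_card_eq_finrank (uu_linIndep t b)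
  rw [Fintype.card_fin, Module.finrank_fintype_fun_eq_card, Fintype.card_fin]

lemma polyDim_eq : polyDim (convexHull ℝ (Set.range (ww t b))) = 2*t+1 := by
  rw [polyDim, affineSpan_convexHull]
  have hdir : (affineSpan ℝ (Set.range (ww t b))).direction = ⊤ := by
    rw [direction_affineSpan]
    apply le_antisymm le_top
    rw [← span_uu_top t b]
    rw [Submodule.span_le]
    rintro _ ⟨i, rfl⟩
    have : uu t b i = ww t b i.succ -ᵥ ww t b 0 := by
      rw [ww, Fin.cons_zero, Fin.cons_succ]
      simp
    rw [this]
    exact vsub_mem_vectorSpan ℝ ⟨i.succ, rfl⟩ ⟨0, rfl⟩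
  rw [hdir]
  rw [finrank_top, Module.finrank_fintype_fun_eq_card, Fintype.card_fin]

lemma VV_affineIndependent :
    AffineIndependent ℝ (Subtype.val : {x // x ∈ VV t b} → (Fin (2*t+1) → ℝ)) := by
  have h := (ww_affineIndependent t b).range
  have hco : (VV t b : Set (Fin (2*t+1) → ℝ)) = Set.range (ww t b) := coe_VV t b
  let e : {x // x ∈ VV t b} ≃ Set.range (ww t b) :=
    Equiv.subtypeEquivRight (fun x => by rw [← hco, Finset.mem_coe])
  exact h.comp_embedding e.toEmbedding

lemma ehrhart_eq' (k : ℕ) :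
    ehrhart (convexHull ℝ (Set.range (ww t b))) k
      = (2*t+1 + k).choose (2*t+1)
        + b * (if t+1 ≤ k then (2*t+1 + (k - (t+1))).choose (2*t+1) else 0) := by
  rw [ehrhart_eq]
  rcases le_or_gt (t+1) k with h | h
  · rw [if_pos h]
    have e1 : k + (2*t+1) = 2*t+1 + k := by omega
    have e2 : k + t = 2*t+1 + (k - (t+1)) := by omega
    rw [e1, e2]
  · rw [if_neg (by omega), Nat.choose_eq_zero_of_lt (by omega : k + t < 2*t+1),
      show k + (2*t+1) = 2*t+1 + k from by omega]

lemma hstar : IsHStar (convexHull ℝ (Set.range (ww t b)))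
    (fun i => if i = 0 then 1 else if i = t+1 then (b:ℤ) else 0) := by
  constructor
  · intro i hi
    rw [polyDim_eq] at hi
    show (if i = 0 then (1:ℤ) else if i = t+1 then (b:ℤ) else 0) = 0
    rw [if_neg (by omega), if_neg (by omega)]
  · rw [polyDim_eq]
    have hE : (PowerSeries.mk (fun k => (ehrhart (convexHull ℝ (Set.range (ww t b))) k : ℤ)))
        = (PowerSeries.mk (fun n => ((2*t+1 + n).choose (2*t+1) : ℤ)))
          * (1 + (PowerSeries.C (b:ℤ)) * PowerSeries.X^(t+1)) := by
      ext k
      rw [PowerSeries.coeff_mk, mul_add, mul_one, map_add, PowerSeries.coeff_mk]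
      rw [show (PowerSeries.mk fun n => ((2*t+1+n).choose (2*t+1) : ℤ))
            * (PowerSeries.C (b:ℤ) * PowerSeries.X^(t+1))
          = PowerSeries.C (b:ℤ)
            * ((PowerSeries.mk fun n => ((2*t+1+n).choose (2*t+1) : ℤ)) * PowerSeries.X^(t+1))
          from by ring]
      rw [PowerSeries.coeff_C_mul, PowerSeries.coeff_mul_X_pow', PowerSeries.coeff_mk]
      rw [ehrhart_eq']
      split_ifs with h
      · push_cast
        ring
      · push_cast
        ring
    rw [hE, ← mul_assoc]
    rw [show (1 - PowerSeries.X) ^ (2*t+1+1)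
          * (PowerSeries.mk (fun n => ((2*t+1 + n).choose (2*t+1) : ℤ))) = 1 from by
        rw [mul_comm]
        exact PowerSeries.mk_add_choose_mul_one_sub_pow_eq_one ℤ (2*t+1)]
    rw [one_mul]
    ext k
    rw [PowerSeries.coeff_mk, map_add, PowerSeries.coeff_one, PowerSeries.coeff_C_mul,
      PowerSeries.coeff_X_pow]
    by_cases h0 : k = 0
    · rw [if_pos h0, if_pos h0, if_neg (by omega), mul_zero, add_zero]
    · rw [if_neg h0, if_neg h0, zero_add]
      by_cases h1 : k = t+1
      · rw [if_pos h1, if_pos h1, mul_one]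
      · rw [if_neg h1, if_neg h1, mul_zero]

end Construction

lemma main_construction (t b : ℕ) :
    ∃ V : Finset (Fin (2*t+1) → ℝ),
      V.card = 2*t+2 ∧
      (∀ x ∈ V, isLatticePoint x) ∧
      AffineIndependent ℝ (Subtype.val : {x // x ∈ V} → (Fin (2*t+1) → ℝ)) ∧
      polyDim (convexHull ℝ (V : Set (Fin (2*t+1) → ℝ))) = 2*t+1 ∧
      IsHStar (convexHull ℝ (V : Set (Fin (2*t+1) → ℝ)))
        (fun i => if i = 0 then 1 else if i = t+1 then (b:ℤ) else 0) := by
  refine ⟨VV t b, card_VV t b, VV_lattice t b, VV_affineIndependent t b, ?_, ?_⟩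
  · rw [coe_VV]; exact polyDim_eq t b
  · rw [coe_VV]; exact hstar t b

/-- **Batyrev–Hofscheier.** For all positive integers `s, b` there exists a `(2s-1)`-dimensional
lattice simplex (a lattice polytope with exactly `2s` affinely independent vertices) whose
`h^*`-polynomial equals `1 + b·tˢ`. -/
theorem stmt_11 (s b : ℕ) (hs : 1 ≤ s) (hb : 1 ≤ b) :
    ∃ V : Finset (Fin (2 * s - 1) → ℝ),
      V.card = 2 * s ∧
      (∀ x ∈ V, isLatticePoint x) ∧
      AffineIndependent ℝ (Subtype.val : {x // x ∈ V} → (Fin (2 * s - 1) → ℝ)) ∧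
      polyDim (convexHull ℝ (V : Set (Fin (2 * s - 1) → ℝ))) = 2 * s - 1 ∧
      IsHStar (convexHull ℝ (V : Set (Fin (2 * s - 1) → ℝ)))
        (fun i => if i = 0 then 1 else if i = s then (b : ℤ) else 0) := by
  obtain ⟨t, rfl⟩ : ∃ t, s = t + 1 := ⟨s - 1, by omega⟩
  rw [show 2 * (t+1) - 1 = 2*t+1 from by omega, show 2 * (t+1) = 2*t+2 from by omega]
  exact main_construction t b
end
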